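/- arXiv:2211.00247 — 3 statements merged into one kernel-verified Lean document; each statement's English description precedes it below -/
import Mathlib

section
/- If X_1, ..., X_K are multinomially distributed with parameters m and p_1, ..., p_K, then for any M̄ > 0, the probability that ∑_{k=1}^K |X_k/m − p_k| ≥ M̄ is at most 2^K · exp(−m·M̄²/2). -/
open MeasureTheory ProbabilityTheory Finset

section BHCAux

open Real

lemma bhc_pos_denom {q : ℝ} (hq0 : 0 ≤ q) (hq1 : q ≤ 1) (t : ℝ) :
    0 < 1 - q + q * exp t := by
  rcases eq_or_lt_of_le hq0 with h | h
  · simp [← h]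
  · have := exp_pos t
    nlinarith

lemma bhc_hoeffding_bernoulli {q : ℝ} (hq0 : 0 ≤ q) (hq1 : q ≤ 1) {t : ℝ} (ht : 0 ≤ t) :
    (1 - q) * exp (t * (-q)) + q * exp (t * (1 - q)) ≤ exp (t ^ 2 / 8) := by
  set f : ℝ → ℝ := fun s => s ^ 2 / 8 + s * q - Real.log (1 - q + q * exp s) with hf
  set f' : ℝ → ℝ := fun s => s / 4 + q - q * exp s / (1 - q + q * exp s) with hf'
  have hD : ∀ s : ℝ, 0 < 1 - q + q * exp s := bhc_pos_denom hq0 hq1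
  have hderiv : ∀ s : ℝ, HasDerivAt f (f' s) s := by
    intro s
    have h1 : HasDerivAt (fun s : ℝ => 1 - q + q * exp s) (q * exp s) s := by
      simpa using ((hasDerivAt_exp s).const_mul q).const_add (1 - q)
    have h2 : HasDerivAt (fun s : ℝ => Real.log (1 - q + q * exp s))
        (q * exp s / (1 - q + q * exp s)) s := h1.log (hD s).ne'
    have h3 : HasDerivAt (fun s : ℝ => s ^ 2 / 8 + s * q) (s / 4 + q) s := by
      have := ((hasDerivAt_pow 2 s).div_const 8).add ((hasDerivAt_id s).mul_const q)
      refine this.congr_deriv ?_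
      rw [show (2:ℕ) - 1 = 1 from rfl]
      push_cast
      ring
    exact h3.sub h2
  have hderiv' : ∀ s : ℝ, HasDerivAt f'
      (1/4 - (1 - q) * (q * exp s) / (1 - q + q * exp s) ^ 2) s := by
    intro s
    have h1 : HasDerivAt (fun s : ℝ => 1 - q + q * exp s) (q * exp s) s := by
      simpa using ((hasDerivAt_exp s).const_mul q).const_add (1 - q)
    have h2 : HasDerivAt (fun s : ℝ => q * exp s) (q * exp s) s :=
      (hasDerivAt_exp s).const_mul q
    have h3 : HasDerivAt (fun s : ℝ => q * exp s / (1 - q + q * exp s))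
        (((q * exp s) * (1 - q + q * exp s) - (q * exp s) * (q * exp s)) /
          (1 - q + q * exp s) ^ 2) s := h2.div h1 (hD s).ne'
    have h4 : HasDerivAt (fun s : ℝ => s / 4 + q) (1/4) s := by
      simpa using ((hasDerivAt_id s).div_const 4).add_const q
    have h5 := h4.sub h3
    refine h5.congr_deriv ?_
    have := (hD s).ne'
    congr 2
    ring
  have hsecond : ∀ s : ℝ, 0 ≤ 1/4 - (1 - q) * (q * exp s) / (1 - q + q * exp s) ^ 2 := by
    intro s
    rw [sub_nonneg, div_le_iff₀ (pow_pos (hD s) 2)]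
    nlinarith [sq_nonneg ((1 - q) - q * exp s), exp_pos s, hD s]
  have hf'mono : Monotone f' := by
    refine monotone_of_deriv_nonneg (fun s => (hderiv' s).differentiableAt) ?_
    intro s; rw [(hderiv' s).deriv]; exact hsecond s
  have hf'zero : f' 0 = 0 := by
    have : (1 : ℝ) - q + q * exp 0 = 1 := by simp
    simp [hf', this]
  have hfmono : MonotoneOn f (Set.Ici 0) := by
    refine monotoneOn_of_deriv_nonneg (convex_Ici 0)
      ((Differentiable.continuous fun s => (hderiv s).differentiableAt).continuousOn) ?_ ?_
    · exact fun s _ => (hderiv s).differentiableAt.differentiableWithinAt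
    · intro s hs
      rw [interior_Ici] at hs
      rw [(hderiv s).deriv]
      calc (0:ℝ) = f' 0 := hf'zero.symm
        _ ≤ f' s := hf'mono (le_of_lt hs)
  have hf0 : f 0 = 0 := by
    have : (1 : ℝ) - q + q * exp 0 = 1 := by simp
    simp [hf, this]
  have hft : 0 ≤ f t := by
    have := hfmono (Set.self_mem_Ici) (Set.mem_Ici.2 ht) ht
    rwa [hf0] at this
  have hlog : Real.log (1 - q + q * exp t) ≤ t ^ 2 / 8 + t * q := by
    simp only [hf] at hft; linarith
  have hexp : 1 - q + q * exp t ≤ exp (t ^ 2 / 8 + t * q) := by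
    calc 1 - q + q * exp t = exp (Real.log (1 - q + q * exp t)) :=
          (exp_log (hD t)).symm
      _ ≤ exp (t ^ 2 / 8 + t * q) := exp_le_exp.2 hlog
  have key : exp (t * (-q)) * (1 - q + q * exp t) ≤ exp (t ^ 2 / 8) := by
    have h := mul_le_mul_of_nonneg_left hexp (le_of_lt (exp_pos (t * (-q))))
    calc exp (t * (-q)) * (1 - q + q * exp t)
        ≤ exp (t * (-q)) * exp (t ^ 2 / 8 + t * q) := h
      _ = exp (t ^ 2 / 8) := by rw [← exp_add]; ring_nf
  calc (1 - q) * exp (t * (-q)) + q * exp (t * (1 - q))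
      = exp (t * (-q)) * (1 - q + q * exp t) := by
        rw [mul_add]
        congr 1
        · ring
        · rw [mul_comm q (exp t), ← mul_assoc, ← exp_add]
          ring_nf
    _ ≤ exp (t ^ 2 / 8) := key

variable {Ω : Type*} [MeasurableSpace Ω] (P : Measure Ω) [IsProbabilityMeasure P]

lemma bhc_eq_indicator (S : Set Ω) (q t : ℝ) :
    (fun ω => exp (t * (S.indicator 1 ω - q)))
      = fun ω => S.indicator (fun _ => exp (t * (1 - q))) ω
          + Sᶜ.indicator (fun _ => exp (t * (-q))) ω := by
  funext ω
  by_cases h : ω ∈ S <;>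
    simp [h, Set.indicator_of_mem, Set.indicator_of_notMem, mul_comm]

lemma bhc_integrable {S : Set Ω} (hS : MeasurableSet S) (q t : ℝ) :
    Integrable (fun ω => exp (t * (S.indicator 1 ω - q))) P := by
  rw [bhc_eq_indicator]
  exact ((integrable_const _).indicator hS).add ((integrable_const _).indicator hS.compl)

lemma bhc_mgf {S : Set Ω} (hS : MeasurableSet S) {q : ℝ} (t : ℝ) (hq0 : 0 ≤ q)
    (hq1 : q ≤ 1) (hPS : P S = ENNReal.ofReal q) :
    mgf (fun ω => S.indicator 1 ω - q) P t
      = q * exp (t * (1 - q)) + (1 - q) * exp (t * (-q)) := by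
  have hPSc : (P Sᶜ).toReal = 1 - q := by
    rw [measure_compl hS (measure_ne_top _ _), measure_univ, hPS]
    rw [ENNReal.toReal_sub_of_le (ENNReal.ofReal_le_one.2 hq1) ENNReal.one_ne_top]
    simp [ENNReal.toReal_ofReal hq0]
  rw [mgf, bhc_eq_indicator]
  rw [integral_add ((integrable_const _).indicator hS) ((integrable_const _).indicator hS.compl)]
  rw [integral_indicator_const _ hS, integral_indicator_const _ hS.compl]
  rw [measureReal_def, measureReal_def, hPS, hPSc, ENNReal.toReal_ofReal hq0, smul_eq_mul, smul_eq_mul]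

end BHCAux

/-- Bretagnolle–Huber–Carol inequality: if `(X_1,...,X_K)` is multinomially distributed
with parameters `m` and `p_1,...,p_K` (realized as the vector of category counts of `m`
i.i.d. categorical samples `Y_1,...,Y_m` with `P(Y_j = k) = p_k`), then for any `Mbar > 0`,
`P(∑_k |X_k/m − p_k| ≥ Mbar) ≤ 2^K exp(−m Mbar²/2)`. -/
theorem bretagnolle_huber_carol
    {Ω : Type*} [MeasurableSpace Ω] (P : Measure Ω) [IsProbabilityMeasure P]
    (K m : ℕ) (p : Fin K → ℝ) (hp : ∀ k, 0 ≤ p k) (hpsum : ∑ k, p k = 1)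
    (Y : Fin m → Ω → Fin K) (hYmeas : ∀ j, Measurable (Y j))
    (hindep : iIndepFun Y P)
    (hdist : ∀ j k, P {ω | Y j ω = k} = ENNReal.ofReal (p k))
    (X : Fin K → Ω → ℝ)
    (hX : ∀ k ω, X k ω = ((Finset.univ.filter (fun j => Y j ω = k)).card : ℝ))
    (Mbar : ℝ) (hM : 0 < Mbar) :
    P {ω | Mbar ≤ ∑ k, |X k ω / m - p k|}
      ≤ ENNReal.ofReal (2 ^ K * Real.exp (-(m : ℝ) * Mbar ^ 2 / 2)) := by
  classical
  -- trivial case m = 0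
  rcases Nat.eq_zero_or_pos m with hm | hm
  · subst hm
    calc P {ω | Mbar ≤ ∑ k, |X k ω / (0:ℕ) - p k|} ≤ 1 := prob_le_one
      _ ≤ ENNReal.ofReal (2 ^ K * Real.exp (-((0:ℕ) : ℝ) * Mbar ^ 2 / 2)) := by
          simp only [Nat.cast_zero, neg_zero, zero_mul, zero_div, Real.exp_zero, mul_one]
          rw [← ENNReal.ofReal_one]
          exact ENNReal.ofReal_le_ofReal (one_le_pow₀ (by norm_num))
  have hmpos : (0:ℝ) < m := by exact_mod_cast hm
  -- notation
  set c : ℝ := Real.exp (-(m : ℝ) * Mbar ^ 2 / 2) with hc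
  -- counts
  have hcard : ∀ (ω : Ω) (A : Finset (Fin K)),
      ((Finset.univ.filter (fun j => Y j ω ∈ A)).card : ℝ) = ∑ k ∈ A, X k ω := by
    intro ω A
    have hU : Finset.univ.filter (fun j => Y j ω ∈ A)
        = A.biUnion (fun k => Finset.univ.filter (fun j => Y j ω = k)) := by
      ext j; simp
    rw [hU, Finset.card_biUnion]
    · push_cast
      exact Finset.sum_congr rfl fun k _ => (hX k ω).symm
    · intro k _ k' _ hkk'
      simp only [Finset.disjoint_left, Finset.mem_filter]
      rintro j ⟨-, rfl⟩ ⟨-, h⟩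
      exact hkk' h
  have hXsum : ∀ ω : Ω, ∑ k, X k ω = m := by
    intro ω
    have := hcard ω Finset.univ
    simpa using this.symm
  -- the events for each subset
  set E : Finset (Fin K) → Set Ω := fun A =>
    {ω | (m:ℝ) * Mbar / 2 ≤ ∑ j, ((A : Set (Fin K)).indicator 1 (Y j ω) - ∑ k ∈ A, p k)}
    with hE
  -- inclusion in the union
  have hsub : {ω | Mbar ≤ ∑ k, |X k ω / m - p k|} ⊆ ⋃ A ∈ (Finset.univ : Finset (Finset (Fin K))), E A := by
    intro ω hω
    simp only [Set.mem_setOf_eq] at hω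
    set a : Fin K → ℝ := fun k => X k ω / m - p k with ha
    set A : Finset (Fin K) := Finset.univ.filter (fun k => 0 ≤ a k) with hA
    have hsum0 : ∑ k, a k = 0 := by
      simp only [ha, Finset.sum_sub_distrib, hpsum]
      rw [← Finset.sum_div, hXsum ω, div_self hmpos.ne']
      ring
    have hsplit : ∑ k ∈ A, a k + ∑ k ∈ Aᶜ, a k = 0 := by
      rw [Finset.sum_add_sum_compl]; exact hsum0
    have habs : ∑ k, |a k| = ∑ k ∈ A, a k - ∑ k ∈ Aᶜ, a k := by
      rw [← Finset.sum_add_sum_compl A fun k => |a k|]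
      congr 1
      · exact Finset.sum_congr rfl fun k hk => abs_of_nonneg (Finset.mem_filter.1 hk).2
      · rw [← Finset.sum_neg_distrib]
        refine Finset.sum_congr rfl fun k hk => ?_
        have : ¬ (0 ≤ a k) := by
          simp only [hA, Finset.mem_compl, Finset.mem_filter, Finset.mem_univ, true_and] at hk
          exact hk
        exact abs_of_neg (lt_of_not_ge this)
    have hAbig : Mbar / 2 ≤ ∑ k ∈ A, a k := by linarith
    refine Set.mem_iUnion₂.2 ⟨A, Finset.mem_univ A, ?_⟩
    simp only [hE, Set.mem_setOf_eq]
    have hind : ∀ j : Fin m, (A : Set (Fin K)).indicator (1 : Fin K → ℝ) (Y j ω)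
        = if Y j ω ∈ A then (1:ℝ) else 0 := by
      intro j
      by_cases h : Y j ω ∈ A <;> simp [h]
    have hsum1 : ∑ j, (A : Set (Fin K)).indicator (1 : Fin K → ℝ) (Y j ω)
        = ∑ k ∈ A, X k ω := by
      rw [← hcard ω A]
      rw [Finset.sum_congr rfl fun j _ => hind j]
      simp [Finset.sum_boole]
    have hsum2 : ∑ j, ((A : Set (Fin K)).indicator (1 : Fin K → ℝ) (Y j ω) - ∑ k ∈ A, p k)
        = (∑ k ∈ A, X k ω) - m * ∑ k ∈ A, p k := by
      rw [Finset.sum_sub_distrib, hsum1, Finset.sum_const, Finset.card_univ, Fintype.card_fin,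
        nsmul_eq_mul]
    rw [hsum2]
    have hAa : ∑ k ∈ A, a k = (∑ k ∈ A, X k ω) / m - ∑ k ∈ A, p k := by
      simp only [ha, Finset.sum_sub_distrib, Finset.sum_div]
    have := mul_le_mul_of_nonneg_left hAbig hmpos.le
    rw [hAa] at this
    have hdiv : (m:ℝ) * ((∑ k ∈ A, X k ω) / m - ∑ k ∈ A, p k)
        = (∑ k ∈ A, X k ω) - m * ∑ k ∈ A, p k := by
      field_simp
    rw [hdiv] at this
    linarith
  -- the Chernoff bound for each subset
  have hAbound : ∀ A : Finset (Fin K), P (E A) ≤ ENNReal.ofReal c := by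
    intro A
    set q : ℝ := ∑ k ∈ A, p k with hq
    have hq0 : 0 ≤ q := Finset.sum_nonneg fun k _ => hp k
    have hq1 : q ≤ 1 := by
      rw [← hpsum]
      exact Finset.sum_le_sum_of_subset_of_nonneg (Finset.subset_univ A) fun k _ _ => hp k
    set t : ℝ := 2 * Mbar with htdef
    have ht : 0 ≤ t := by positivity
    set Z : Fin m → Ω → ℝ :=
      fun j => (fun y : Fin K => (A : Set (Fin K)).indicator 1 y - q) ∘ Y j with hZ
    have hZmeas : ∀ j, Measurable (Z j) :=
      fun j => (measurable_of_countable _).comp (hYmeas j)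
    have hZindep : iIndepFun Z P :=
      hindep.comp _ fun j => measurable_of_countable _
    -- distribution of the indicator events
    have hPS : ∀ j, P (Y j ⁻¹' (A : Set (Fin K))) = ENNReal.ofReal q := by
      intro j
      have hUeq : Y j ⁻¹' (A : Set (Fin K)) = ⋃ k ∈ A, {ω | Y j ω = k} := by
        ext ω; simp
      rw [hUeq, measure_biUnion_finset]
      · rw [Finset.sum_congr rfl fun k _ => hdist j k]
        exact (ENNReal.ofReal_sum_of_nonneg fun k _ => hp k).symm
      · intro k _ k' _ hkk'
        simp only [Set.disjoint_left, Set.mem_setOf_eq]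
        rintro ω rfl h
        exact hkk' h
      · intro k _
        exact (hYmeas j) (MeasurableSet.singleton k)
    -- each Z j as an indicator function form
    have hZeq : ∀ j, Z j = fun ω => (Y j ⁻¹' (A : Set (Fin K))).indicator 1 ω - q := by
      intro j
      funext ω
      simp only [hZ, Function.comp_apply]
      by_cases h : Y j ω ∈ (A : Set (Fin K)) <;>
        simp [h, Set.indicator_of_mem, Set.indicator_of_notMem]
    have hSmeas : ∀ j, MeasurableSet (Y j ⁻¹' (A : Set (Fin K))) :=
      fun j => (hYmeas j) (A : Set (Fin K)).toFinite.measurableSet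
    have hZint : ∀ j, Integrable (fun ω => Real.exp (t * Z j ω)) P := by
      intro j
      rw [hZeq j]
      exact bhc_integrable P (hSmeas j) q t
    have hZmgf : ∀ j, mgf (Z j) P t ≤ Real.exp (t ^ 2 / 8) := by
      intro j
      rw [hZeq j, bhc_mgf P (hSmeas j) t hq0 hq1 (hPS j)]
      have := bhc_hoeffding_bernoulli hq0 hq1 ht
      linarith
    -- Chernoff
    have hchern := measure_ge_le_exp_mul_mgf (X := ∑ j, Z j) (μ := P)
      ((m:ℝ) * Mbar / 2) ht
      (hZindep.integrable_exp_mul_sum hZmeas fun j _ => hZint j)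
    rw [iIndepFun.mgf_sum hZindep hZmeas] at hchern
    have hprod : ∏ j, mgf (Z j) P t ≤ Real.exp (t ^ 2 / 8) ^ m := by
      calc ∏ j, mgf (Z j) P t ≤ ∏ _j : Fin m, Real.exp (t ^ 2 / 8) :=
            Finset.prod_le_prod (fun j _ => mgf_nonneg) (fun j _ => hZmgf j)
        _ = Real.exp (t ^ 2 / 8) ^ m := by
            rw [Finset.prod_const, Finset.card_univ, Fintype.card_fin]
    have hfinal : (P {ω | (m:ℝ) * Mbar / 2 ≤ (∑ j, Z j) ω}).toReal ≤ c := by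
      calc (P {ω | (m:ℝ) * Mbar / 2 ≤ (∑ j, Z j) ω}).toReal
          ≤ Real.exp (-t * ((m:ℝ) * Mbar / 2)) * ∏ j, mgf (Z j) P t := hchern
        _ ≤ Real.exp (-t * ((m:ℝ) * Mbar / 2)) * Real.exp (t ^ 2 / 8) ^ m := by
            exact mul_le_mul_of_nonneg_left hprod (Real.exp_pos _).le
        _ = c := by
            rw [← Real.exp_nat_mul, ← Real.exp_add, hc]
            congr 1
            simp only [htdef]
            ring
    have hEeq : E A = {ω | (m:ℝ) * Mbar / 2 ≤ (∑ j, Z j) ω} := by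
      simp only [hE, hZ, Finset.sum_apply, Function.comp_apply, hq]
    rw [hEeq]
    calc P {ω | (m:ℝ) * Mbar / 2 ≤ (∑ j, Z j) ω}
        = ENNReal.ofReal (P {ω | (m:ℝ) * Mbar / 2 ≤ (∑ j, Z j) ω}).toReal :=
          (ENNReal.ofReal_toReal (measure_ne_top _ _)).symm
      _ ≤ ENNReal.ofReal c := ENNReal.ofReal_le_ofReal hfinal
  -- union bound
  calc P {ω | Mbar ≤ ∑ k, |X k ω / m - p k|}
      ≤ P (⋃ A ∈ (Finset.univ : Finset (Finset (Fin K))), E A) := measure_mono hsub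
    _ ≤ ∑ A ∈ (Finset.univ : Finset (Finset (Fin K))), P (E A) :=
        measure_biUnion_finset_le _ _
    _ ≤ ∑ _A ∈ (Finset.univ : Finset (Finset (Fin K))), ENNReal.ofReal c :=
        Finset.sum_le_sum fun A _ => hAbound A
    _ = (2 ^ K : ℕ) * ENNReal.ofReal c := by
        rw [Finset.sum_const, Finset.card_univ, Fintype.card_finset, Fintype.card_fin,
          nsmul_eq_mul]
    _ = ENNReal.ofReal (2 ^ K * c) := by
        rw [ENNReal.ofReal_mul (by positivity)]
        congr 1
        rw [show ((2:ℝ)^K) = ((2^K : ℕ) : ℝ) by push_cast; ring, ENNReal.ofReal_natCast]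
end

section
/- Let ρ be a probability measure on G, {G_k}_{k=1}^K a finite measurable partition, φ : G → ℝ bounded with |φ| ≤ M, and g_1,...,g_n i.i.d. ∼ ρ. Define ω = (1/n)∑_{k: I_k≠∅} |I_k|·((1/|I_k|)∑_{i∈I_k}φ(g_i) − E[φ | g∈G_k]). Then for any δ > 0, with probability at least 1 − δ: E_{g∼ρ}[φ(g)] ≥ (1/n)∑_{i=1}^n φ(g_i) − M·√(2·K·ln(2/δ)/n) − ω. -/
open MeasureTheory ProbabilityTheory Finset

section AuxHoeffding
open Real MeasureTheory ProbabilityTheory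

private 
lemma aux_bernoulli_mgf (p : ℝ) (hp0 : 0 ≤ p) (hp1 : p ≤ 1) (h : ℝ) :
    (1 - p) + p * Real.exp h ≤ Real.exp (p * h + h ^ 2 / 8) := by
  have hu : ∀ x : ℝ, 0 < 1 - p + p * Real.exp x := by
    intro x
    rcases eq_or_lt_of_le hp0 with h0 | h0
    · simp [← h0]
    · have := mul_pos h0 (exp_pos x); nlinarith
  set F : ℝ → ℝ := fun x => p * x + x ^ 2 / 8 - Real.log (1 - p + p * Real.exp x) with hF_def
  set Gf : ℝ → ℝ := fun x => p + x / 4 - p * Real.exp x / (1 - p + p * Real.exp x) with hG_def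
  have hu' : ∀ x : ℝ, HasDerivAt (fun y => 1 - p + p * Real.exp y) (p * Real.exp x) x := by
    intro x
    exact ((Real.hasDerivAt_exp x).const_mul p).const_add (1 - p)
  have hF : ∀ x, HasDerivAt F (Gf x) x := by
    intro x
    have h1 : HasDerivAt (fun y : ℝ => p * y) p x := by
      simpa using (hasDerivAt_id x).const_mul p
    have h2 : HasDerivAt (fun y : ℝ => y ^ 2 / 8) (x / 4) x := by
      have := (hasDerivAt_pow 2 x).div_const 8
      exact this.congr_deriv (by norm_num; ring)
    have h3 : HasDerivAt (fun y => Real.log (1 - p + p * Real.exp y))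
        (p * Real.exp x / (1 - p + p * Real.exp x)) x := (hu' x).log (hu x).ne'
    exact (h1.add h2).sub h3
  have hG : ∀ x, HasDerivAt Gf
      (1 / 4 - p * Real.exp x * (1 - p) / (1 - p + p * Real.exp x) ^ 2) x := by
    intro x
    have h1 : HasDerivAt (fun y : ℝ => p + y / 4) (1 / 4) x := by
      exact ((hasDerivAt_id x).div_const 4).const_add p
    have h2 : HasDerivAt (fun y => p * Real.exp y / (1 - p + p * Real.exp y))
        ((p * Real.exp x * (1 - p + p * Real.exp x) - p * Real.exp x * (p * Real.exp x)) /
          (1 - p + p * Real.exp x) ^ 2) x :=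
      ((Real.hasDerivAt_exp x).const_mul p).div (hu' x) (hu x).ne'
    have := h1.sub h2
    exact this.congr_deriv (by ring)
  have hGderiv_nonneg : ∀ x : ℝ,
      0 ≤ 1 / 4 - p * Real.exp x * (1 - p) / (1 - p + p * Real.exp x) ^ 2 := by
    intro x
    rw [sub_nonneg, div_le_iff₀ (pow_pos (hu x) 2)]
    nlinarith [sq_nonneg (1 - p - p * Real.exp x)]
  have hGmono : Monotone Gf :=
    monotone_of_deriv_nonneg (fun x => (hG x).differentiableAt)
      (fun x => by rw [(hG x).deriv]; exact hGderiv_nonneg x)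
  have hG0 : Gf 0 = 0 := by simp [hG_def]
  have hF0 : F 0 = 0 := by simp [hF_def]
  have hFnonneg : ∀ x : ℝ, 0 ≤ F x := by
    intro x
    rcases le_total 0 x with hx | hx
    · have := monotoneOn_of_deriv_nonneg (convex_Ici (0:ℝ))
        (fun y _ => (hF y).differentiableAt.continuousAt.continuousWithinAt)
        (fun y _ => (hF y).differentiableAt.differentiableWithinAt)
        (fun y hy => by
          rw [(hF y).deriv]
          rw [interior_Ici] at hy
          calc (0:ℝ) = Gf 0 := hG0.symm
          _ ≤ Gf y := hGmono (le_of_lt hy))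
      have := this (Set.self_mem_Ici) (Set.mem_Ici.2 hx) hx
      rwa [hF0] at this
    · have := antitoneOn_of_deriv_nonpos (convex_Iic (0:ℝ))
        (fun y _ => (hF y).differentiableAt.continuousAt.continuousWithinAt)
        (fun y _ => (hF y).differentiableAt.differentiableWithinAt)
        (fun y hy => by
          rw [(hF y).deriv]
          rw [interior_Iic] at hy
          calc Gf y ≤ Gf 0 := hGmono (le_of_lt hy)
          _ = 0 := hG0)
      have := this (Set.mem_Iic.2 hx) (Set.self_mem_Iic) hx
      rwa [hF0] at this
    
  have := hFnonneg h
  have hlog : Real.log (1 - p + p * Real.exp h) ≤ p * h + h ^ 2 / 8 := by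
    simp only [hF_def] at this; linarith
  calc (1 - p) + p * Real.exp h = Real.exp (Real.log (1 - p + p * Real.exp h)) := by
        rw [Real.exp_log (hu h)]
  _ ≤ Real.exp (p * h + h ^ 2 / 8) := Real.exp_le_exp.2 hlog


private lemma aux_hoeffding {Ω : Type*} [MeasurableSpace Ω] (μ : Measure Ω) [IsProbabilityMeasure μ]
    (X : Ω → ℝ) (hX : Measurable X) (a b : ℝ) (ha : ∀ ω, a ≤ X ω) (hb : ∀ ω, X ω ≤ b)
    (hE : ∫ ω, X ω ∂μ = 0) (t : ℝ) :
    ProbabilityTheory.mgf X μ t ≤ Real.exp (t ^ 2 * (b - a) ^ 2 / 8) := by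
  set C := max |a| |b| with hC_def
  have hC : ∀ ω, |X ω| ≤ C := by
    intro ω
    refine abs_le.2 ⟨?_, (hb ω).trans ((le_abs_self b).trans (le_max_right _ _))⟩
    calc -C ≤ -|a| := neg_le_neg (le_max_left _ _)
    _ ≤ a := neg_abs_le a
    _ ≤ X ω := ha ω
  have hint : Integrable X μ :=
    (integrable_const C).mono' hX.aestronglyMeasurable (Filter.Eventually.of_forall hC)
  have ha0 : a ≤ 0 := by
    have h1 : ∫ _ : Ω, a ∂μ ≤ ∫ ω, X ω ∂μ := integral_mono (integrable_const a) hint ha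
    simpa [hE] using h1
  have hb0 : 0 ≤ b := by
    have h1 : ∫ ω, X ω ∂μ ≤ ∫ _ : Ω, b ∂μ := integral_mono hint (integrable_const b) hb
    simpa [hE] using h1
  rcases eq_or_lt_of_le (ha0.trans hb0) with hab | hab
  · -- a = b, hence a = 0 = b and X = 0
    have ha' : a = 0 := le_antisymm ha0 (by rw [hab]; exact hb0)
    have hb' : b = 0 := by rw [← hab]; exact ha'
    have hX0 : ∀ ω, X ω = 0 := fun ω => le_antisymm (by rw [← hb']; exact hb ω)
      (by rw [← ha']; exact ha ω)
    simp [ProbabilityTheory.mgf, hX0, ha', hb']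
  · -- a < b
    set p : ℝ := -a / (b - a) with hp_def
    have hba : (0:ℝ) < b - a := by linarith
    have hp0 : 0 ≤ p := div_nonneg (by linarith) hba.le
    have hp1 : p ≤ 1 := by
      rw [div_le_one hba]; linarith
    -- pointwise convexity bound
    have key : ∀ ω, Real.exp (t * X ω) ≤
        (b * Real.exp (t * a) - a * Real.exp (t * b)) / (b - a) +
          X ω * ((Real.exp (t * b) - Real.exp (t * a)) / (b - a)) := by
      intro ω
      have hα : 0 ≤ (b - X ω) / (b - a) := div_nonneg (by linarith [hb ω]) hba.le
      have hβ : 0 ≤ (X ω - a) / (b - a) := div_nonneg (by linarith [ha ω]) hba.le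
      have hsum : (b - X ω) / (b - a) + (X ω - a) / (b - a) = 1 := by
        field_simp
        ring
      have hconv := convexOn_exp.2 (Set.mem_univ (t * a)) (Set.mem_univ (t * b)) hα hβ hsum
      simp only [smul_eq_mul] at hconv
      have harg : (b - X ω) / (b - a) * (t * a) + (X ω - a) / (b - a) * (t * b) = t * X ω := by
        field_simp
        ring
      rw [harg] at hconv
      calc Real.exp (t * X ω) ≤
          (b - X ω) / (b - a) * Real.exp (t * a) + (X ω - a) / (b - a) * Real.exp (t * b) := hconv
      _ = (b * Real.exp (t * a) - a * Real.exp (t * b)) / (b - a) +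
          X ω * ((Real.exp (t * b) - Real.exp (t * a)) / (b - a)) := by
        field_simp
        ring
    -- integrate
    have hexp_int : Integrable (fun ω => Real.exp (t * X ω)) μ := by
      refine (integrable_const (Real.exp (|t| * C))).mono'
        ((hX.const_mul t).exp.aestronglyMeasurable) (Filter.Eventually.of_forall fun ω => ?_)
      rw [Real.norm_eq_abs, abs_of_pos (exp_pos _)]
      refine Real.exp_le_exp.2 ?_
      calc t * X ω ≤ |t * X ω| := le_abs_self _
      _ = |t| * |X ω| := abs_mul t (X ω)
      _ ≤ |t| * C := by
        exact mul_le_mul_of_nonneg_left (hC ω) (abs_nonneg t)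
    have hmgf_le : ProbabilityTheory.mgf X μ t ≤
        (b * Real.exp (t * a) - a * Real.exp (t * b)) / (b - a) := by
      have hint2 : Integrable (fun ω =>
          (b * Real.exp (t * a) - a * Real.exp (t * b)) / (b - a) +
            X ω * ((Real.exp (t * b) - Real.exp (t * a)) / (b - a))) μ :=
        (integrable_const _).add (hint.mul_const _)
      have := integral_mono hexp_int hint2 key
      rw [integral_add (integrable_const _) (hint.mul_const _), integral_const,
        integral_mul_const, hE, probReal_univ] at this
      simpa [ProbabilityTheory.mgf] using this
    -- rewrite in terms of p and h := t*(b-a)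
    set hh : ℝ := t * (b - a) with hh_def
    have hta : t * a = -(p * hh) := by
      rw [hp_def, hh_def]
      field_simp
    have htb : t * b = (1 - p) * hh := by
      rw [hp_def, hh_def]
      field_simp
      ring
    have hc1 : (b * Real.exp (t * a) - a * Real.exp (t * b)) / (b - a) =
        Real.exp (-(p * hh)) * ((1 - p) + p * Real.exp hh) := by
      rw [hta, htb]
      have h1p : 1 - p = b / (b - a) := by
        rw [hp_def]
        field_simp
        ring
      have hp' : p = -a / (b - a) := hp_def
      rw [mul_add]
      rw [show (1 - p) * hh = hh + -(p * hh) by ring, Real.exp_add]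
      rw [h1p, hp']
      field_simp
      ring
    calc ProbabilityTheory.mgf X μ t ≤
        (b * Real.exp (t * a) - a * Real.exp (t * b)) / (b - a) := hmgf_le
    _ = Real.exp (-(p * hh)) * ((1 - p) + p * Real.exp hh) := hc1
    _ ≤ Real.exp (-(p * hh)) * Real.exp (p * hh + hh ^ 2 / 8) := by
        exact mul_le_mul_of_nonneg_left (aux_bernoulli_mgf p hp0 hp1 hh) (exp_pos _).le
    _ = Real.exp (hh ^ 2 / 8) := by
        rw [← Real.exp_add]; ring_nf
    _ = Real.exp (t ^ 2 * (b - a) ^ 2 / 8) := by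
        rw [hh_def, mul_pow]

private lemma aux_exp_integrable {Ω : Type*} [MeasurableSpace Ω] (μ : Measure Ω)
    [IsProbabilityMeasure μ] (X : Ω → ℝ) (hX : Measurable X) (a b : ℝ)
    (ha : ∀ ω, a ≤ X ω) (hb : ∀ ω, X ω ≤ b) (s : ℝ) :
    Integrable (fun ω => Real.exp (s * X ω)) μ := by
  refine (integrable_const (Real.exp (|s| * max |a| |b|))).mono'
    ((hX.const_mul s).exp.aestronglyMeasurable) (Filter.Eventually.of_forall fun ω => ?_)
  rw [Real.norm_eq_abs, abs_of_pos (exp_pos _)]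
  refine Real.exp_le_exp.2 ?_
  have hC : |X ω| ≤ max |a| |b| := by
    refine abs_le.2 ⟨?_, (hb ω).trans ((le_abs_self b).trans (le_max_right _ _))⟩
    calc -(max |a| |b|) ≤ -|a| := neg_le_neg (le_max_left _ _)
    _ ≤ a := neg_abs_le a
    _ ≤ X ω := ha ω
  calc s * X ω ≤ |s * X ω| := le_abs_self _
  _ = |s| * |X ω| := abs_mul s (X ω)
  _ ≤ |s| * max |a| |b| := mul_le_mul_of_nonneg_left hC (abs_nonneg s)

lemma aux_chernoff {Ω : Type*} [MeasurableSpace Ω] (P : Measure Ω) [IsProbabilityMeasure P]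
    {n : ℕ} (Y : Fin n → Ω → ℝ) (hYmeas : ∀ i, Measurable (Y i))
    (hYindep : iIndepFun Y P)
    (a b : ℝ) (ha : ∀ i ω, a ≤ Y i ω) (hb : ∀ i ω, Y i ω ≤ b)
    (hE : ∀ i, ∫ ω, Y i ω ∂P = 0) (ε s : ℝ) (hs : 0 ≤ s) :
    (P {ω | ε ≤ ∑ i, Y i ω}).toReal ≤
      Real.exp (-s * ε) * Real.exp (n * (s ^ 2 * (b - a) ^ 2 / 8)) := by
  have h_int : ∀ i ∈ Finset.univ (α := Fin n), Integrable (fun ω => Real.exp (s * Y i ω)) P :=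
    fun i _ => aux_exp_integrable P (Y i) (hYmeas i) a b (ha i) (hb i) s
  have h_int_sum : Integrable (fun ω => Real.exp (s * (∑ i, Y i) ω)) P :=
    hYindep.integrable_exp_mul_sum hYmeas h_int
  have h1 : (P {ω | ε ≤ (∑ i, Y i) ω}).toReal ≤ Real.exp (-s * ε) * mgf (∑ i, Y i) P s :=
    measure_ge_le_exp_mul_mgf ε hs h_int_sum
  have h2 : mgf (∑ i, Y i) P s ≤ Real.exp (n * (s ^ 2 * (b - a) ^ 2 / 8)) := by
    rw [hYindep.mgf_sum hYmeas Finset.univ]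
    calc ∏ i, mgf (Y i) P s ≤ ∏ _i : Fin n, Real.exp (s ^ 2 * (b - a) ^ 2 / 8) :=
        Finset.prod_le_prod (fun i _ => mgf_nonneg)
          (fun i _ => aux_hoeffding P (Y i) (hYmeas i) a b (ha i) (hb i) (hE i) s)
    _ = Real.exp (n * (s ^ 2 * (b - a) ^ 2 / 8)) := by
        rw [Finset.prod_const, ← Real.exp_nat_mul, Finset.card_univ, Fintype.card_fin]
  have hset : {ω | ε ≤ ∑ i, Y i ω} = {ω | ε ≤ (∑ i, Y i) ω} := by
    ext ω; simp [Finset.sum_apply]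
  rw [hset]
  calc (P {ω | ε ≤ (∑ i, Y i) ω}).toReal ≤ Real.exp (-s * ε) * mgf (∑ i, Y i) P s := h1
  _ ≤ Real.exp (-s * ε) * Real.exp (n * (s ^ 2 * (b - a) ^ 2 / 8)) :=
      mul_le_mul_of_nonneg_left h2 (exp_pos _).le

end AuxHoeffding

/-- Theorem 1 of the paper (identity-map case): with probability at least `1 − δ`,
the expected return over unseen goals is lower bounded by the empirical average of
returns over the `n` i.i.d. training goals minus the concentration penalty
`M √(2 K ln(2/δ)/n)` minus the within-cell deviation term `ω`. -/
theorem expected_return_lower_bound_id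
    {G : Type*} [MeasurableSpace G] (ρ : Measure G) [IsProbabilityMeasure ρ]
    {Ω : Type*} [MeasurableSpace Ω] (P : Measure Ω) [IsProbabilityMeasure P]
    (K : ℕ) (Gk : Fin K → Set G) (hmeas : ∀ k, MeasurableSet (Gk k))
    (hdisj : Pairwise (Function.onFun Disjoint Gk)) (hcover : (⋃ k, Gk k) = Set.univ)
    (φ : G → ℝ) (hφ : Integrable φ ρ) (M : ℝ) (hM : ∀ x, |φ x| ≤ M)
    (n : ℕ) (hn : 0 < n) (g : Fin n → Ω → G) (hgmeas : ∀ i, Measurable (g i))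
    (hindep : iIndepFun g P)
    (hdist : ∀ i, Measure.map (g i) P = ρ)
    (I : Fin K → Ω → Finset (Fin n)) (hI : ∀ k ω i, i ∈ I k ω ↔ g i ω ∈ Gk k)
    (condE : Fin K → ℝ)
    (hcondE : ∀ k, condE k = (∫ x in Gk k, φ x ∂ρ) / (ρ (Gk k)).toReal)
    (w : Ω → ℝ)
    (hw : ∀ ω, w ω = (1 / (n : ℝ)) * ∑ k, ((I k ω).card : ℝ) *
        ((1 / ((I k ω).card : ℝ)) * ∑ i ∈ I k ω, φ (g i ω) - condE k))
    (δ : ℝ) (hδ : 0 < δ) :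
    ENNReal.ofReal (1 - δ) ≤
      P {ω | (1 / (n : ℝ)) * ∑ i, φ (g i ω)
              - M * Real.sqrt (2 * K * Real.log (2 / δ) / n) - w ω
            ≤ ∫ x, φ x ∂ρ} := by
  classical
  -- trivial case δ ≥ 1
  rcases le_or_gt 1 δ with hδ1 | hδ1
  · rw [ENNReal.ofReal_of_nonpos (by linarith)]
    exact zero_le
  -- G is nonempty
  have hGne : Nonempty G := by
    by_contra h
    have h1 : (Set.univ : Set G) = ∅ := Set.univ_eq_empty_iff.2 (not_nonempty_iff.1 h)
    have h2 := measure_univ (μ := ρ)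
    rw [h1, measure_empty] at h2
    exact zero_ne_one h2
  have hM0 : 0 ≤ M := (abs_nonneg _).trans (hM (Classical.arbitrary G))
  have hK : 0 < K := by
    by_contra h
    push_neg at h
    interval_cases K
    have h1 : (⋃ k : Fin 0, Gk k) = ∅ := Set.iUnion_of_empty _
    rw [hcover] at h1
    exact (Set.univ_eq_empty_iff.1 h1).elim (Classical.arbitrary G)
  have hn' : (0 : ℝ) < n := Nat.cast_pos.2 hn
  -- the cell-average function f
  set f : G → ℝ := fun x => ∑ k, Set.indicator (Gk k) (fun _ => condE k) x with hf_def
  have hfmeas : Measurable f :=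
    Finset.measurable_sum _ fun k _ => measurable_const.indicator (hmeas k)
  have hcell : ∀ x : G, ∃ k, x ∈ Gk k ∧ ∀ j, x ∈ Gk j → j = k := by
    intro x
    have hx : x ∈ ⋃ k, Gk k := hcover ▸ Set.mem_univ x
    obtain ⟨k, hk⟩ := Set.mem_iUnion.1 hx
    refine ⟨k, hk, fun j hj => ?_⟩
    by_contra hjk
    exact Set.disjoint_left.1 (hdisj hjk) hj hk
  have hf_eq : ∀ k x, x ∈ Gk k → f x = condE k := by
    intro k x hx
    simp only [hf_def]
    rw [Finset.sum_eq_single k]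
    · simp [Set.indicator_of_mem hx]
    · intro j _ hjk
      refine Set.indicator_of_notMem (fun hj => ?_) _
      exact hjk ((hcell x).choose_spec.2 j hj ▸ ((hcell x).choose_spec.2 k hx).symm ▸ rfl)
    · simp
  -- |condE k| ≤ M
  have hcondE_bound : ∀ k, |condE k| ≤ M := by
    intro k
    rw [hcondE k]
    rcases eq_or_ne ((ρ (Gk k)).toReal) 0 with hc | hc
    · simp [hc, hM0]
    have hcpos : 0 < (ρ (Gk k)).toReal := lt_of_le_of_ne ENNReal.toReal_nonneg (Ne.symm hc)
    have hint_abs : |∫ x in Gk k, φ x ∂ρ| ≤ M * (ρ (Gk k)).toReal := by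
      calc |∫ x in Gk k, φ x ∂ρ| ≤ ∫ x in Gk k, |φ x| ∂ρ := by
              simpa [Real.norm_eq_abs] using
                norm_integral_le_integral_norm (μ := ρ.restrict (Gk k)) φ
      _ ≤ ∫ _x in Gk k, M ∂ρ :=
          integral_mono hφ.restrict.abs (integrable_const M) (fun x => hM x)
      _ = M * (ρ (Gk k)).toReal := by
          rw [setIntegral_const, smul_eq_mul, mul_comm]
          rfl
    rw [abs_div, abs_of_pos hcpos, div_le_iff₀ hcpos]
    exact hint_abs
  have hfbound : ∀ x, |f x| ≤ M := by
    intro x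
    obtain ⟨k, hk, _⟩ := hcell x
    rw [hf_eq k x hk]
    exact hcondE_bound k
  set m : ℝ := ∫ x, φ x ∂ρ with hm_def
  -- ∫ f = ∫ φ
  have hfint : Integrable f ρ :=
    (integrable_const M).mono' hfmeas.aestronglyMeasurable
      (Filter.Eventually.of_forall fun x => by rw [Real.norm_eq_abs]; exact hfbound x)
  have hterm : ∀ k, condE k * (ρ (Gk k)).toReal = ∫ x in Gk k, φ x ∂ρ := by
    intro k
    rcases eq_or_ne ((ρ (Gk k)).toReal) 0 with hc | hc
    · have hρ0 : ρ (Gk k) = 0 :=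
        (ENNReal.toReal_eq_zero_iff _).1 hc |>.resolve_right (measure_ne_top ρ _)
      rw [hc, mul_zero]
      rw [Measure.restrict_eq_zero.2 hρ0, integral_zero_measure]
    · rw [hcondE k, div_mul_cancel₀ _ hc]
  have hf_int_eq : ∫ x, f x ∂ρ = m := by
    have h1 : ∫ x, f x ∂ρ = ∑ k, condE k * (ρ (Gk k)).toReal := by
      rw [hf_def]
      rw [integral_finset_sum _ (fun k _ =>
        (integrable_const (condE k)).indicator (hmeas k))]
      congr 1
      ext k
      rw [integral_indicator_const _ (hmeas k), smul_eq_mul, mul_comm]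
      rfl
    have h2 : m = ∑ k, ∫ x in Gk k, φ x ∂ρ := by
      rw [hm_def, ← setIntegral_univ, ← hcover,
        integral_iUnion hmeas hdisj (hcover ▸ hφ.integrableOn)]
      exact tsum_fintype _
    rw [h1, h2]
    exact Finset.sum_congr rfl fun k _ => hterm k
  -- the pointwise identity
  have hkey : ∀ ω, (1 / (n : ℝ)) * ∑ i, φ (g i ω) - w ω = (1 / (n : ℝ)) * ∑ i, f (g i ω) := by
    intro ω
    have hIk : ∀ k, I k ω = Finset.univ.filter (fun i => g i ω ∈ Gk k) := by
      intro k; ext i; simp [hI]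
    have hsum_part : ∀ u : Fin n → ℝ, ∑ k, ∑ i ∈ I k ω, u i = ∑ i, u i := by
      intro u
      simp_rw [hIk, Finset.sum_filter]
      rw [Finset.sum_comm]
      refine Finset.sum_congr rfl fun i _ => ?_
      obtain ⟨k₀, hk₀, huniq⟩ := hcell (g i ω)
      rw [Finset.sum_eq_single k₀]
      · simp [hk₀]
      · intro j _ hj
        simp only [ite_eq_right_iff]
        intro hmem
        exact absurd (huniq j hmem) hj
      · simp
    have hclaim : ∀ k, ((I k ω).card : ℝ) *
        ((1 / ((I k ω).card : ℝ)) * ∑ i ∈ I k ω, φ (g i ω) - condE k) =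
        (∑ i ∈ I k ω, φ (g i ω)) - ∑ i ∈ I k ω, f (g i ω) := by
      intro k
      have hfc : ∑ i ∈ I k ω, f (g i ω) = ((I k ω).card : ℝ) * condE k := by
        rw [Finset.sum_congr rfl (fun i hi => hf_eq k (g i ω) ((hI k ω i).1 hi))]
        rw [Finset.sum_const, nsmul_eq_mul]
      rcases eq_or_ne (I k ω) ∅ with he | he
      · simp [he]
      · have hcard : ((I k ω).card : ℝ) ≠ 0 := by
          simp [Finset.card_eq_zero, he]
        rw [hfc]
        field_simp
    rw [hw ω]
    rw [Finset.sum_congr rfl (fun k _ => hclaim k)]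
    rw [Finset.sum_sub_distrib, hsum_part, hsum_part]
    ring
  -- case M = 0
  rcases eq_or_lt_of_le hM0 with hMz | hMpos
  · have hφ0 : ∀ x, φ x = 0 := fun x => abs_nonpos_iff.1 (hMz ▸ hM x)
    have hcond0 : ∀ k, condE k = 0 := by
      intro k; rw [hcondE k]
      simp [hφ0]
    have hw0 : ∀ ω, w ω = 0 := by
      intro ω; rw [hw ω]
      simp [hφ0, hcond0]
    have hset : {ω | (1 / (n : ℝ)) * ∑ i, φ (g i ω)
              - M * Real.sqrt (2 * K * Real.log (2 / δ) / n) - w ω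
            ≤ ∫ x, φ x ∂ρ} = Set.univ := by
      refine Set.eq_univ_of_forall fun ω => ?_
      simp [hφ0, hw0, ← hMz]
    rw [hset, measure_univ]
    exact ENNReal.ofReal_le_one.2 (by linarith)
  -- main case
  set L : ℝ := Real.log (2 / δ) with hL_def
  have hLpos : 0 < L := Real.log_pos (by rw [lt_div_iff₀ hδ]; linarith)
  set S : ℝ := Real.sqrt (2 * K * L / n) with hS_def
  have hSnn : 0 ≤ S := Real.sqrt_nonneg _
  have hS2 : S ^ 2 = 2 * K * L / n := Real.sq_sqrt (by positivity)
  set ε : ℝ := (n : ℝ) * (M * S) with hε_def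
  set s : ℝ := S / M with hs_def
  have hs0 : 0 ≤ s := div_nonneg hSnn hM0
  -- the random variables
  set Y : Fin n → Ω → ℝ := fun i ω => f (g i ω) - m with hY_def
  have hYmeas : ∀ i, Measurable (Y i) := fun i =>
    (hfmeas.comp (hgmeas i)).sub measurable_const
  have hYindep : iIndepFun Y P :=
    hindep.comp (fun _ x => f x - m) (fun _ => hfmeas.sub measurable_const)
  have hYa : ∀ i ω, -M - m ≤ Y i ω := by
    intro i ω
    have := (abs_le.1 (hfbound (g i ω))).1
    simp only [hY_def]; linarith
  have hYb : ∀ i ω, Y i ω ≤ M - m := by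
    intro i ω
    have := (abs_le.1 (hfbound (g i ω))).2
    simp only [hY_def]; linarith
  have hYE : ∀ i, ∫ ω, Y i ω ∂P = 0 := by
    intro i
    have hfg_int : Integrable (fun ω => f (g i ω)) P :=
      (integrable_const M).mono' (hfmeas.comp (hgmeas i)).aestronglyMeasurable
        (Filter.Eventually.of_forall fun ω => by
          rw [Real.norm_eq_abs]; exact hfbound (g i ω))
    have h1 : ∫ ω, f (g i ω) ∂P = ∫ x, f x ∂ρ := by
      rw [← hdist i, integral_map (hgmeas i).aemeasurable
        (hfmeas.aestronglyMeasurable.mono_ac (by rw [hdist i]))]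
    simp only [hY_def]
    rw [integral_sub hfg_int (integrable_const m), integral_const, probReal_univ, smul_eq_mul, one_mul, h1, hf_int_eq, sub_self]
  -- Chernoff bound
  set B : Set Ω := {ω | ε ≤ ∑ i, Y i ω} with hB_def
  have hBmeas : MeasurableSet B :=
    measurableSet_le measurable_const (Finset.measurable_sum _ fun i _ => hYmeas i)
  have hexp_eq : -s * ε + (n : ℝ) * (s ^ 2 * ((M - m) - (-M - m)) ^ 2 / 8) = -((K : ℝ) * L) := by
    have hMne : M ≠ 0 := ne_of_gt hMpos
    have h1 : ((M - m) - (-M - m)) = 2 * M := by ring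
    rw [h1]
    have h2 : -s * ε + (n : ℝ) * (s ^ 2 * (2 * M) ^ 2 / 8) = -(((n : ℝ)) * S ^ 2 / 2) := by
      rw [hs_def, hε_def]
      field_simp
      ring
    rw [h2, hS2]
    field_simp
  have hPB : (P B).toReal ≤ δ := by
    have h1 := aux_chernoff P Y hYmeas hYindep (-M - m) (M - m) hYa hYb hYE ε s hs0
    rw [← Real.exp_add, hexp_eq] at h1
    calc (P B).toReal ≤ Real.exp (-((K : ℝ) * L)) := h1
    _ ≤ Real.exp (-L) := by
        refine Real.exp_le_exp.2 ?_
        have : (1 : ℝ) ≤ (K : ℝ) := by exact_mod_cast hK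
        nlinarith
    _ = δ / 2 := by
        rw [hL_def, ← Real.log_inv, inv_div, Real.exp_log (by linarith)]
    _ ≤ δ := by linarith
  -- set inclusion
  have hsub : Bᶜ ⊆ {ω | (1 / (n : ℝ)) * ∑ i, φ (g i ω)
              - M * Real.sqrt (2 * K * Real.log (2 / δ) / n) - w ω
            ≤ ∫ x, φ x ∂ρ} := by
    intro ω hω
    simp only [hB_def, Set.mem_compl_iff, Set.mem_setOf_eq, not_le] at hω
    have hsumY : ∑ i, Y i ω = (∑ i, f (g i ω)) - (n : ℝ) * m := by
      simp only [hY_def]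
      rw [Finset.sum_sub_distrib, Finset.sum_const, Finset.card_univ, Fintype.card_fin,
        nsmul_eq_mul]
    rw [hsumY] at hω
    have h1 : ∑ i, f (g i ω) < (n : ℝ) * (M * S) + (n : ℝ) * m := by
      rw [hε_def] at hω; linarith
    have h2 : (1 / (n : ℝ)) * ∑ i, f (g i ω) < M * S + m := by
      calc (1 / (n : ℝ)) * ∑ i, f (g i ω)
          < (1 / (n : ℝ)) * ((n : ℝ) * (M * S) + (n : ℝ) * m) :=
            mul_lt_mul_of_pos_left h1 (by positivity)
      _ = M * S + m := by field_simp
    have hkeyω := hkey ω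
    simp only [Set.mem_setOf_eq]
    linarith [hkeyω, h2]
  -- conclude
  calc ENNReal.ofReal (1 - δ) = 1 - ENNReal.ofReal δ := by
        rw [ENNReal.ofReal_sub _ hδ.le, ENNReal.ofReal_one]
  _ ≤ 1 - P B := tsub_le_tsub le_rfl
        (by rw [← ENNReal.ofReal_toReal (measure_ne_top P B)]
            exact ENNReal.ofReal_le_ofReal hPB)
  _ = P Bᶜ := (prob_compl_eq_one_sub hBmeas).symm
  _ ≤ P _ := measure_mono hsub
end

section
/- Under the hypotheses of the uniform law of large numbers within each cell (Θ compact, φ_θ continuous in θ for a.e. g, dominated by integrable χ, finitely many cells G_k each with ρ(G_k) > 0 among those that receive samples), sup_{θ∈Θ} |ω_n(θ)| → 0 in probability as n → ∞, where ω_n(θ) = (1/n)∑_{k: I_k≠∅} |I_k|·((1/|I_k|)∑_{i∈I_k}φ_θ(g_i) − E_ρ[φ_θ|G_k]). -/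
open MeasureTheory ProbabilityTheory Filter Finset Topology

section Helpers

/-- LLN for a measurable integrable function composed with an iid sequence. -/
lemma lln_comp {G : Type*} [MeasurableSpace G] (ρ : Measure G)
    {Ω : Type*} [MeasurableSpace Ω] (P : Measure Ω)
    (g : ℕ → Ω → G) (hgmeas : ∀ i, Measurable (g i))
    (hindep : iIndepFun g P)
    (hdist : ∀ i, Measure.map (g i) P = ρ)
    (f : G → ℝ) (hf : Measurable f) (hfint : Integrable f ρ) :
    ∀ᵐ ω ∂P, Tendsto (fun n : ℕ => (∑ i ∈ range n, f (g i ω)) / n) atTop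
      (𝓝 (∫ x, f x ∂ρ)) := by
  have hident : ∀ i, IdentDistrib (fun ω => f (g i ω)) (fun ω => f (g 0 ω)) P P := by
    intro i
    exact IdentDistrib.comp ⟨(hgmeas i).aemeasurable, (hgmeas 0).aemeasurable,
      by rw [hdist i, hdist 0]⟩ hf
  have hindep' : Pairwise (Function.onFun (IndepFun · · P) fun i ω => f (g i ω)) := by
    intro i j hij
    exact (hindep.indepFun hij).comp hf hf
  have hint : Integrable (fun ω => f (g 0 ω)) P := by
    rw [← hdist 0] at hfint
    exact (integrable_map_measure hf.aestronglyMeasurable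
      (hgmeas 0).aemeasurable).mp hfint
  have h := strong_law_ae_real (fun i ω => f (g i ω)) hint hindep' hident
  have heq : (∫ ω, f (g 0 ω) ∂P) = ∫ x, f x ∂ρ := by
    rw [← hdist 0, integral_map (hgmeas 0).aemeasurable hf.aestronglyMeasurable]
  simpa [heq] using h

variable {G : Type*} [MeasurableSpace G] {m : ℕ}
  {Θ T : Set (EuclideanSpace ℝ (Fin m))}
  {φ : EuclideanSpace ℝ (Fin m) → G → ℝ} {χ : G → ℝ}
  {θ0 : EuclideanSpace ℝ (Fin m)} {r : ℝ}

lemma bracket_meas (hTsub : T ⊆ Θ) (hTc : T.Countable)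
    (hφmeas : ∀ θ ∈ Θ, Measurable (φ θ)) (hθ0 : θ0 ∈ Θ) :
    Measurable fun x => ⨆ t : ↥(T ∩ Metric.ball θ0 r), |φ t.1 x - φ θ0 x| := by
  haveI : Countable ↥(T ∩ Metric.ball θ0 r) := (hTc.mono Set.inter_subset_left).to_subtype
  exact Measurable.iSup fun t =>
    ((hφmeas t.1 (hTsub t.2.1)).sub (hφmeas θ0 hθ0)).abs

lemma bracket_nonneg : ∀ x, 0 ≤ ⨆ t : ↥(T ∩ Metric.ball θ0 r), |φ t.1 x - φ θ0 x| :=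
  fun _ => Real.iSup_nonneg fun _ => abs_nonneg _

lemma bracket_bddAbove (hTsub : T ⊆ Θ) (hθ0 : θ0 ∈ Θ)
    (hdom : ∀ θ ∈ Θ, ∀ x, |φ θ x| ≤ χ x) (x : G) :
    BddAbove (Set.range fun t : ↥(T ∩ Metric.ball θ0 r) => |φ t.1 x - φ θ0 x|) := by
  refine ⟨2 * χ x, ?_⟩
  rintro _ ⟨t, rfl⟩
  calc |φ t.1 x - φ θ0 x| ≤ |φ t.1 x| + |φ θ0 x| := abs_sub _ _
    _ ≤ χ x + χ x := add_le_add (hdom t.1 (hTsub t.2.1) x) (hdom θ0 hθ0 x)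
    _ = 2 * χ x := by ring

lemma bracket_le (hTsub : T ⊆ Θ) (hθ0 : θ0 ∈ Θ)
    (hdom : ∀ θ ∈ Θ, ∀ x, |φ θ x| ≤ χ x) (x : G) :
    (⨆ t : ↥(T ∩ Metric.ball θ0 r), |φ t.1 x - φ θ0 x|) ≤ 2 * χ x := by
  have hχ0 : 0 ≤ χ x := le_trans (abs_nonneg _) (hdom θ0 hθ0 x)
  refine Real.iSup_le (fun t => ?_) (by linarith)
  calc |φ t.1 x - φ θ0 x| ≤ |φ t.1 x| + |φ θ0 x| := abs_sub _ _
    _ ≤ χ x + χ x := add_le_add (hdom t.1 (hTsub t.2.1) x) (hdom θ0 hθ0 x)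
    _ = 2 * χ x := by ring

lemma bracket_key (hTsub : T ⊆ Θ) (hTd : Θ ⊆ closure T)
    (hdom : ∀ θ ∈ Θ, ∀ x, |φ θ x| ≤ χ x)
    (hθ0 : θ0 ∈ Θ) (hr : 0 < r) (x : G)
    (hx : ContinuousOn (fun θ => φ θ x) Θ)
    {θ : EuclideanSpace ℝ (Fin m)} (hθ : θ ∈ Θ) (hclose : dist θ θ0 < r / 2) :
    |φ θ x - φ θ0 x| ≤ ⨆ t : ↥(T ∩ Metric.ball θ0 r), |φ t.1 x - φ θ0 x| := by
  refine le_of_forall_pos_le_add fun η hη => ?_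
  have hc := hx θ hθ
  rw [Metric.continuousWithinAt_iff] at hc
  obtain ⟨δ', hδ', hcb⟩ := hc η hη
  obtain ⟨t, htT, hdt⟩ := Metric.mem_closure_iff.1 (hTd hθ) (min δ' (r / 2))
    (lt_min hδ' (by linarith))
  have htΘ : t ∈ Θ := hTsub htT
  have htb : t ∈ Metric.ball θ0 r := by
    rw [Metric.mem_ball]
    calc dist t θ0 ≤ dist t θ + dist θ θ0 := dist_triangle _ _ _
      _ < r / 2 + r / 2 := by
          have h' := lt_of_lt_of_le hdt (min_le_right _ _)
          rw [dist_comm] at h'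
          exact add_lt_add h' hclose
      _ = r := by ring
  have hdtθ : dist t θ < δ' := by
    rw [dist_comm]; exact lt_of_lt_of_le hdt (min_le_left _ _)
  have h1 : |φ t x - φ θ x| < η := by
    have := hcb htΘ hdtθ
    rwa [Real.dist_eq] at this
  have h2 : |φ t x - φ θ0 x| ≤ ⨆ t : ↥(T ∩ Metric.ball θ0 r), |φ t.1 x - φ θ0 x| :=
    le_ciSup (bracket_bddAbove hTsub hθ0 hdom x) (⟨t, htT, htb⟩ : ↥(T ∩ Metric.ball θ0 r))
  calc |φ θ x - φ θ0 x| ≤ |φ θ x - φ t x| + |φ t x - φ θ0 x| := abs_sub_le _ _ _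
    _ ≤ η + (⨆ t : ↥(T ∩ Metric.ball θ0 r), |φ t.1 x - φ θ0 x|) := by
        rw [abs_sub_comm] at h1; exact add_le_add h1.le h2
    _ = _ + η := by ring

lemma bracket_small (ρ : Measure G) [IsProbabilityMeasure ρ]
    (hTsub : T ⊆ Θ) (hTc : T.Countable)
    (hcont : ∀ᵐ x ∂ρ, ContinuousOn (fun θ => φ θ x) Θ)
    (hφmeas : ∀ θ ∈ Θ, Measurable (φ θ))
    (hdom : ∀ θ ∈ Θ, ∀ x, |φ θ x| ≤ χ x) (hχ : Integrable χ ρ)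
    (hθ0 : θ0 ∈ Θ) {δ : ℝ} (hδ : 0 < δ) :
    ∃ r > 0, (∫ x, (⨆ t : ↥(T ∩ Metric.ball θ0 r), |φ t.1 x - φ θ0 x|) ∂ρ) < δ := by
  set F : ℕ → G → ℝ := fun j x => ⨆ t : ↥(T ∩ Metric.ball θ0 (1 / (j + 1))), |φ t.1 x - φ θ0 x|
    with hF
  have hrj : ∀ j : ℕ, (0 : ℝ) < 1 / (j + 1) := fun j => by positivity
  have hlim : ∀ᵐ x ∂ρ, Tendsto (fun j => F j x) atTop (𝓝 0) := by
    filter_upwards [hcont] with x hx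
    rw [Metric.tendsto_atTop]
    intro η hη
    have hc := hx θ0 hθ0
    rw [Metric.continuousWithinAt_iff] at hc
    obtain ⟨δ', hδ', hcb⟩ := hc (η / 2) (by linarith)
    obtain ⟨N, hN⟩ := exists_nat_gt (1 / δ')
    refine ⟨N, fun j hj => ?_⟩
    have hsmall : 1 / ((j : ℝ) + 1) < δ' := by
      rw [div_lt_iff₀ (by positivity)]
      rw [div_lt_iff₀ hδ'] at hN
      calc (1 : ℝ) < δ' * N := by linarith [hN]
        _ ≤ δ' * (j + 1) := by
            have hNj : (N : ℝ) ≤ (j : ℝ) + 1 := by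
              have : (N : ℝ) ≤ j := Nat.cast_le.mpr hj
              linarith
            nlinarith
    have hFle : F j x ≤ η / 2 := by
      refine Real.iSup_le (fun t => ?_) (by linarith)
      have htΘ : t.1 ∈ Θ := hTsub t.2.1
      have htb : dist t.1 θ0 < δ' := lt_trans (Metric.mem_ball.1 t.2.2) hsmall
      have := hcb htΘ htb
      rw [Real.dist_eq] at this
      exact this.le
    have hF0 : 0 ≤ F j x := bracket_nonneg x
    rw [Real.dist_eq, sub_zero, abs_of_nonneg hF0]
    linarith
  have hmeasF : ∀ j : ℕ, AEStronglyMeasurable (F j) ρ :=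
    fun j => (bracket_meas hTsub hTc hφmeas hθ0).aestronglyMeasurable
  have hbound : ∀ j : ℕ, ∀ᵐ x ∂ρ, ‖F j x‖ ≤ 2 * χ x := by
    intro j
    refine ae_of_all _ fun x => ?_
    rw [Real.norm_eq_abs, abs_of_nonneg (bracket_nonneg x)]
    exact bracket_le hTsub hθ0 hdom x
  have hint : Integrable (fun x => 2 * χ x) ρ := hχ.const_mul 2
  have htend : Tendsto (fun j => ∫ x, F j x ∂ρ) atTop (𝓝 (∫ _x, (0 : ℝ) ∂ρ)) :=
    tendsto_integral_of_dominated_convergence _ hmeasF hint hbound hlim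
  rw [integral_zero] at htend
  obtain ⟨j, hj⟩ := (htend.eventually_lt_const hδ).exists
  exact ⟨1 / (j + 1), hrj j, hj⟩

end Helpers

/-- Second part of Theorem 1: under the uniform-LLN hypotheses (compact `Θ`, `φ_θ`
continuous in `θ` for a.e. `g`, dominated by an integrable `χ`) and a finite measurable
partition into cells of positive measure, the within-cell deviation term
`ω_n(θ)` satisfies `sup_{θ∈Θ} |ω_n(θ)| → 0` in probability as `n → ∞`. -/
theorem omega_tendsto_zero_in_probability
    {G : Type*} [MeasurableSpace G] (ρ : Measure G) [IsProbabilityMeasure ρ]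
    {Ω : Type*} [MeasurableSpace Ω] (P : Measure Ω) [IsProbabilityMeasure P]
    (m : ℕ) (Θ : Set (EuclideanSpace ℝ (Fin m))) (hΘ : IsCompact Θ)
    (φ : EuclideanSpace ℝ (Fin m) → G → ℝ)
    (hcont : ∀ᵐ x ∂ρ, ContinuousOn (fun θ => φ θ x) Θ)
    (hφmeas : ∀ θ ∈ Θ, Measurable (φ θ))
    (χ : G → ℝ) (hdom : ∀ θ ∈ Θ, ∀ x, |φ θ x| ≤ χ x) (hχ : Integrable χ ρ)
    (K : ℕ) (Gk : Fin K → Set G) (hmeas : ∀ k, MeasurableSet (Gk k))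
    (hdisj : Pairwise (Function.onFun Disjoint Gk)) (hcover : (⋃ k, Gk k) = Set.univ)
    (hpos : ∀ k, 0 < ρ (Gk k))
    (g : ℕ → Ω → G) (hgmeas : ∀ i, Measurable (g i))
    (hindep : iIndepFun g P)
    (hdist : ∀ i, Measure.map (g i) P = ρ)
    (I : Fin K → ℕ → Ω → Finset ℕ)
    (hI : ∀ k n ω i, i ∈ I k n ω ↔ i < n ∧ g i ω ∈ Gk k)
    (condE : EuclideanSpace ℝ (Fin m) → Fin K → ℝ)
    (hcondE : ∀ θ k, condE θ k = (∫ x in Gk k, φ θ x ∂ρ) / (ρ (Gk k)).toReal)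
    (w : EuclideanSpace ℝ (Fin m) → ℕ → Ω → ℝ)
    (hw : ∀ θ n ω, w θ n ω = (1 / (n : ℝ)) * ∑ k, ((I k n ω).card : ℝ) *
        ((1 / ((I k n ω).card : ℝ)) * ∑ i ∈ I k n ω, φ θ (g i ω) - condE θ k)) :
    ∀ ε > (0 : ℝ), Tendsto
      (fun (n : ℕ) => P {ω | ε ≤ ⨆ θ : Θ, |w θ n ω|}) atTop (nhds 0) := by
  classical
  intro ε hε
  rcases isEmpty_or_nonempty ↥Θ with hΘe | hΘne
  · have hset : ∀ n : ℕ, {ω | ε ≤ ⨆ θ : Θ, |w θ n ω|} = (∅ : Set Ω) := by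
      intro n
      ext ω
      simp only [Set.mem_setOf_eq, Set.mem_empty_iff_false, iff_false, not_le]
      rw [Real.iSup_of_isEmpty]
      exact hε
    simp only [hset, measure_empty]
    exact tendsto_const_nhds
  obtain ⟨θb, hθb⟩ : ∃ θ, θ ∈ Θ := by obtain ⟨⟨θb, hθb⟩⟩ := hΘne; exact ⟨θb, hθb⟩
  have hχ0 : ∀ x, 0 ≤ χ x := fun x => le_trans (abs_nonneg _) (hdom θb hθb x)
  have hρk : ∀ k, 0 < (ρ (Gk k)).toReal := fun k =>
    ENNReal.toReal_pos (hpos k).ne' (measure_ne_top ρ _)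
  have hφint : ∀ θ ∈ Θ, Integrable (φ θ) ρ := fun θ hθ =>
    hχ.mono' (hφmeas θ hθ).aestronglyMeasurable (ae_of_all _ fun x => by
      rw [Real.norm_eq_abs]; exact hdom θ hθ x)
  -- the cell membership function
  have hcellex : ∀ x : G, ∃ k, x ∈ Gk k := fun x => by
    have : x ∈ ⋃ k, Gk k := hcover ▸ Set.mem_univ x
    exact Set.mem_iUnion.1 this
  choose cell hcellmem using hcellex
  have hcelluniq : ∀ x k, x ∈ Gk k → cell x = k := by
    intro x k hx
    by_contra h
    exact Set.disjoint_left.1 (hdisj h) (hcellmem x) hx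
  have hIfil : ∀ k n ω, I k n ω = (range n).filter (fun i => g i ω ∈ Gk k) := by
    intro k n ω
    ext i
    rw [hI, mem_filter, mem_range]
  have hpart : ∀ (n : ℕ) (ω : Ω) (F : ℕ → ℝ),
      ∑ k, ∑ i ∈ I k n ω, F i = ∑ i ∈ range n, F i := by
    intro n ω F
    have hfc : ∀ k, I k n ω = (range n).filter (fun i => cell (g i ω) = k) := by
      intro k
      rw [hIfil]
      ext i
      simp only [mem_filter, mem_range]
      constructor
      · rintro ⟨h1, h2⟩; exact ⟨h1, hcelluniq _ _ h2⟩
      · rintro ⟨h1, h2⟩; exact ⟨h1, h2 ▸ hcellmem _⟩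
    calc ∑ k, ∑ i ∈ I k n ω, F i
        = ∑ k, ∑ i ∈ (range n).filter (fun i => cell (g i ω) = k), F i := by
          exact sum_congr rfl fun k _ => by rw [hfc k]
      _ = ∑ i ∈ range n, F i :=
          sum_fiberwise_of_maps_to (fun i _ => mem_univ (cell (g i ω))) F
  have hcard : ∀ k n ω, ((I k n ω).card : ℝ) =
      ∑ i ∈ range n, (Gk k).indicator (fun _ => (1 : ℝ)) (g i ω) := by
    intro k n ω
    rw [hIfil, card_filter]
    push_cast
    refine sum_congr rfl fun i _ => ?_
    rw [Set.indicator_apply]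
  -- decomposition of w
  have hw2 : ∀ θ n ω, w θ n ω =
      (∑ i ∈ range n, φ θ (g i ω)) / n
        - ∑ k, (((I k n ω).card : ℝ) / n) * condE θ k := by
    intro θ n ω
    rw [hw]
    have hterm : ∀ k : Fin K, ((I k n ω).card : ℝ) *
        ((1 / ((I k n ω).card : ℝ)) * ∑ i ∈ I k n ω, φ θ (g i ω) - condE θ k)
        = (∑ i ∈ I k n ω, φ θ (g i ω)) - ((I k n ω).card : ℝ) * condE θ k := by
      intro k
      by_cases h : (I k n ω).card = 0
      · have he : I k n ω = ∅ := card_eq_zero.1 h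
        simp [he]
      · have h' : ((I k n ω).card : ℝ) ≠ 0 := Nat.cast_ne_zero.2 h
        field_simp
    rw [Finset.sum_congr rfl fun k _ => hterm k, Finset.sum_sub_distrib,
      hpart n ω (fun i => φ θ (g i ω)), mul_sub]
    congr 1
    · rw [mul_comm, mul_one_div]
    · rw [Finset.mul_sum]
      exact Finset.sum_congr rfl fun k _ => by ring
  -- decomposition of the mean
  set M : EuclideanSpace ℝ (Fin m) → ℝ := fun θ => ∫ x, φ θ x ∂ρ with hMdef
  have hMsum : ∀ θ, θ ∈ Θ → M θ = ∑ k, (ρ (Gk k)).toReal * condE θ k := by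
    intro θ hθ
    have h1 : M θ = ∫ x in ⋃ k, Gk k, φ θ x ∂ρ := by
      rw [hcover, setIntegral_univ]
    rw [h1, integral_iUnion hmeas hdisj (hφint θ hθ).integrableOn, tsum_fintype]
    refine sum_congr rfl fun k _ => ?_
    rw [hcondE, mul_comm, div_mul_cancel₀]
    exact (hρk k).ne'
  -- uniform bound on condE
  set C : Fin K → ℝ := fun k => (∫ x, χ x ∂ρ) / (ρ (Gk k)).toReal with hCdef
  have hC0 : ∀ k, 0 ≤ C k := fun k =>
    div_nonneg (integral_nonneg hχ0) ENNReal.toReal_nonneg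
  have hCb : ∀ θ, θ ∈ Θ → ∀ k, |condE θ k| ≤ C k := by
    intro θ hθ k
    rw [hcondE, abs_div, abs_of_nonneg ENNReal.toReal_nonneg]
    rw [hCdef]
    refine (div_le_div_iff_of_pos_right (hρk k)).2 ?_
    calc |∫ x in Gk k, φ θ x ∂ρ| ≤ ∫ x in Gk k, |φ θ x| ∂ρ := by
          simpa [Real.norm_eq_abs] using
            norm_integral_le_integral_norm (μ := ρ.restrict (Gk k)) (φ θ)
      _ ≤ ∫ x in Gk k, χ x ∂ρ :=
          integral_mono ((hφint θ hθ).abs.integrableOn) hχ.integrableOn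
            (fun x => hdom θ hθ x)
      _ ≤ ∫ x, χ x ∂ρ := setIntegral_le_integral hχ (ae_of_all _ hχ0)
  -- countable dense subset of Θ
  obtain ⟨T, hTsub, hTc, hTd⟩ := hΘ.isSeparable.exists_countable_dense_subset
  set δ : ℝ := ε / 4 with hδdef
  have hδ : 0 < δ := by positivity
  have hradex : ∀ θ0 : ↥Θ, ∃ r > 0,
      (∫ x, (⨆ t : ↥(T ∩ Metric.ball θ0.1 r), |φ t.1 x - φ θ0.1 x|) ∂ρ) < δ :=
    fun θ0 => bracket_small ρ hTsub hTc hcont hφmeas hdom hχ θ0.2 hδ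
  choose rad hradpos hradint using hradex
  obtain ⟨s, hs⟩ := hΘ.elim_finite_subcover (fun θ0 : ↥Θ => Metric.ball θ0.1 (rad θ0 / 2))
    (fun θ0 => Metric.isOpen_ball)
    (fun θ hθ => Set.mem_iUnion.2 ⟨⟨θ, hθ⟩,
      Metric.mem_ball_self (by linarith [hradpos ⟨θ, hθ⟩])⟩)
  set H : ↥Θ → G → ℝ :=
    fun j x => ⨆ t : ↥(T ∩ Metric.ball j.1 (rad j)), |φ t.1 x - φ j.1 x| with hHdef
  have hHmeas : ∀ j : ↥Θ, Measurable (H j) := fun j => bracket_meas hTsub hTc hφmeas j.2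
  have hHnonneg : ∀ j x, 0 ≤ H j x := fun j x => bracket_nonneg x
  have hH2χ : ∀ j x, H j x ≤ 2 * χ x := fun j x => bracket_le hTsub j.2 hdom x
  have hHint : ∀ j, Integrable (H j) ρ := fun j =>
    (hχ.const_mul 2).mono' (hHmeas j).aestronglyMeasurable (ae_of_all _ fun x => by
      rw [Real.norm_eq_abs, abs_of_nonneg (hHnonneg j x)]; exact hH2χ j x)
  have hHkey : ∀ (x : G), ContinuousOn (fun θ => φ θ x) Θ → ∀ (j : ↥Θ) (θ),
      θ ∈ Θ → dist θ j.1 < rad j / 2 → |φ θ x - φ j.1 x| ≤ H j x :=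
    fun x hx j θ hθ hd => bracket_key hTsub hTd hdom j.2 (hradpos j) x hx hθ hd
  have hHintlt : ∀ j, ∫ x, H j x ∂ρ < δ := hradint
  -- the dominating sequence Z
  set Z : ℕ → Ω → ℝ := fun n ω =>
    (∑ j ∈ s, (|(∑ i ∈ range n, φ j.1 (g i ω)) / n - M j.1|
      + |(∑ i ∈ range n, H j (g i ω)) / n - ∫ x, H j x ∂ρ|))
    + ∑ k, |((I k n ω).card : ℝ) / n - (ρ (Gk k)).toReal| * C k with hZdef
  have hZnonneg : ∀ n ω, 0 ≤ Z n ω := by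
    intro n ω
    apply add_nonneg
    · exact sum_nonneg fun j _ => add_nonneg (abs_nonneg _) (abs_nonneg _)
    · exact sum_nonneg fun k _ => mul_nonneg (abs_nonneg _) (hC0 k)
  have hcardmeas : ∀ k n, Measurable (fun ω => ((I k n ω).card : ℝ)) := by
    intro k n
    have he : (fun ω => ((I k n ω).card : ℝ))
        = fun ω => ∑ i ∈ range n, (Gk k).indicator (fun _ => (1 : ℝ)) (g i ω) :=
      funext fun ω => hcard k n ω
    rw [he]
    exact Finset.measurable_sum _ fun i _ =>
      (measurable_const.indicator (hmeas k)).comp (hgmeas i)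
  have hZmeas : ∀ n, Measurable (Z n) := by
    intro n
    apply Measurable.add
    · apply Finset.measurable_sum
      intro j _
      apply Measurable.add
      · exact (((Finset.measurable_sum _ fun i _ =>
          (hφmeas j.1 j.2).comp (hgmeas i)).div_const _).sub measurable_const).abs
      · exact (((Finset.measurable_sum _ fun i _ =>
          (hHmeas j).comp (hgmeas i)).div_const _).sub measurable_const).abs
    · apply Finset.measurable_sum
      intro k _
      exact ((((hcardmeas k n).div_const _).sub measurable_const).abs).mul_const _
  -- almost sure convergence of Z to 0
  have hllnφ : ∀ j : ↥Θ, ∀ᵐ ω ∂P, Tendsto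
      (fun n => (∑ i ∈ range n, φ j.1 (g i ω)) / n) atTop (𝓝 (M j.1)) :=
    fun j => lln_comp ρ P g hgmeas hindep hdist (φ j.1) (hφmeas j.1 j.2) (hφint j.1 j.2)
  have hllnH : ∀ j : ↥Θ, ∀ᵐ ω ∂P, Tendsto
      (fun n => (∑ i ∈ range n, H j (g i ω)) / n) atTop (𝓝 (∫ x, H j x ∂ρ)) :=
    fun j => lln_comp ρ P g hgmeas hindep hdist (H j) (hHmeas j) (hHint j)
  have hllnI : ∀ k, ∀ᵐ ω ∂P, Tendsto
      (fun n => ((I k n ω).card : ℝ) / n) atTop (𝓝 ((ρ (Gk k)).toReal)) := by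
    intro k
    have hintk : Integrable ((Gk k).indicator fun _ => (1 : ℝ)) ρ := by
      refine (integrable_const (1 : ℝ)).mono'
        (measurable_const.indicator (hmeas k)).aestronglyMeasurable
        (ae_of_all _ fun x => ?_)
      rw [Real.norm_eq_abs, Set.indicator_apply]
      split_ifs <;> simp
    have h := lln_comp ρ P g hgmeas hindep hdist ((Gk k).indicator fun _ => (1 : ℝ))
      (measurable_const.indicator (hmeas k)) hintk
    have hI1 : (∫ x, (Gk k).indicator (fun _ => (1 : ℝ)) x ∂ρ) = (ρ (Gk k)).toReal := by
      exact integral_indicator_one (hmeas k)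
    rw [hI1] at h
    filter_upwards [h] with ω hω
    have he : (fun n : ℕ => ((I k n ω).card : ℝ) / n)
        = fun n => (∑ i ∈ range n, (Gk k).indicator (fun _ => (1 : ℝ)) (g i ω)) / n :=
      funext fun n => by rw [hcard]
    rw [he]
    exact hω
  have hA : ∀ᵐ ω ∂P, ∀ j ∈ (s : Set ↥Θ), Tendsto
      (fun n => (∑ i ∈ range n, φ j.1 (g i ω)) / n) atTop (𝓝 (M j.1)) :=
    (ae_ball_iff s.countable_toSet).2 fun j _ => hllnφ j
  have hB : ∀ᵐ ω ∂P, ∀ j ∈ (s : Set ↥Θ), Tendsto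
      (fun n => (∑ i ∈ range n, H j (g i ω)) / n) atTop (𝓝 (∫ x, H j x ∂ρ)) :=
    (ae_ball_iff s.countable_toSet).2 fun j _ => hllnH j
  have hCae : ∀ᵐ ω ∂P, ∀ k, Tendsto
      (fun n => ((I k n ω).card : ℝ) / n) atTop (𝓝 ((ρ (Gk k)).toReal)) :=
    ae_all_iff.2 hllnI
  have hZ0 : ∀ᵐ ω ∂P, Tendsto (fun n => Z n ω) atTop (𝓝 0) := by
    filter_upwards [hA, hB, hCae] with ω hAω hBω hCω
    have h1 : Tendsto (fun n => ∑ j ∈ s,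
        (|(∑ i ∈ range n, φ j.1 (g i ω)) / n - M j.1|
          + |(∑ i ∈ range n, H j (g i ω)) / n - ∫ x, H j x ∂ρ|)) atTop (𝓝 0) := by
      have h0 : (0 : ℝ) = ∑ j ∈ s, 0 := by simp
      rw [h0]
      refine tendsto_finset_sum _ fun j hj => ?_
      have t1 : Tendsto (fun n => |(∑ i ∈ range n, φ j.1 (g i ω)) / n - M j.1|)
          atTop (𝓝 0) := by
        have := ((hAω j (Finset.mem_coe.2 hj)).sub (tendsto_const_nhds (x := M j.1))).abs
        simpa using this
      have t2 : Tendsto (fun n => |(∑ i ∈ range n, H j (g i ω)) / n - ∫ x, H j x ∂ρ|)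
          atTop (𝓝 0) := by
        have := ((hBω j (Finset.mem_coe.2 hj)).sub
          (tendsto_const_nhds (x := ∫ x, H j x ∂ρ))).abs
        simpa using this
      simpa using t1.add t2
    have h2 : Tendsto (fun n => ∑ k,
        |((I k n ω).card : ℝ) / n - (ρ (Gk k)).toReal| * C k) atTop (𝓝 0) := by
      have h0 : (0 : ℝ) = ∑ k : Fin K, 0 := by simp
      rw [h0]
      refine tendsto_finset_sum _ fun k _ => ?_
      have := (((hCω k).sub (tendsto_const_nhds (x := (ρ (Gk k)).toReal))).abs).mul_const (C k)
      simpa using this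
    simpa using h1.add h2
  -- the good event
  have hgood : ∀ᵐ ω ∂P, ∀ i : ℕ, ContinuousOn (fun θ => φ θ (g i ω)) Θ := by
    rw [ae_all_iff]
    intro i
    exact ae_of_ae_map (hgmeas i).aemeasurable (by rw [hdist i]; exact hcont)
  -- deterministic bound
  have hclaim : ∀ ω, (∀ i : ℕ, ContinuousOn (fun θ => φ θ (g i ω)) Θ) →
      ∀ n, ∀ θ ∈ Θ, |w θ n ω| ≤ Z n ω + 2 * δ := by
    intro ω hω n θ hθ
    obtain ⟨j, hjs, hjball⟩ := Set.mem_iUnion₂.1 (hs hθ)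
    have hdθj : dist θ j.1 < rad j / 2 := Metric.mem_ball.1 hjball
    by_cases hn : n = 0
    · subst hn
      have hw0 : w θ 0 ω = 0 := by
        rw [hw2]
        simp
      rw [hw0, abs_zero]
      have := hZnonneg 0 ω
      linarith
    · have hnpos : (0 : ℝ) < n := by
        exact_mod_cast Nat.pos_of_ne_zero hn
      have hwAS : w θ n ω = (∑ i ∈ range n, φ θ (g i ω)) / n
          - ∑ k, (((I k n ω).card : ℝ) / n) * condE θ k := hw2 θ n ω
      set Aθ : ℝ := (∑ i ∈ range n, φ θ (g i ω)) / n with hAθ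
      set Aj : ℝ := (∑ i ∈ range n, φ j.1 (g i ω)) / n with hAj
      set S : ℝ := ∑ k, (((I k n ω).card : ℝ) / n) * condE θ k with hSdef
      set AH : ℝ := (∑ i ∈ range n, H j (g i ω)) / n with hAH
      set IH : ℝ := ∫ x, H j x ∂ρ with hIH
      -- four-term triangle inequality
      have tri : |w θ n ω| ≤ |Aθ - Aj| + |Aj - M j.1| + |M j.1 - M θ| + |M θ - S| := by
        have h1 := abs_sub_le Aθ Aj S
        have h2 := abs_sub_le Aj (M j.1) S
        have h3 := abs_sub_le (M j.1) (M θ) S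
        rw [hwAS]
        have : |Aθ - S| ≤ |Aθ - Aj| + |Aj - M j.1| + |M j.1 - M θ| + |M θ - S| := by
          linarith
        exact this
      have ht1 : |Aθ - Aj| ≤ AH := by
        have hdiff : Aθ - Aj = (∑ i ∈ range n, (φ θ (g i ω) - φ j.1 (g i ω))) / n := by
          rw [hAθ, hAj, div_sub_div_same, ← Finset.sum_sub_distrib]
        rw [hdiff, abs_div, abs_of_pos hnpos, hAH]
        refine (div_le_div_iff_of_pos_right hnpos).2 ?_
        refine (Finset.abs_sum_le_sum_abs _ _).trans ?_
        refine Finset.sum_le_sum fun i _ => ?_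
        exact hHkey (g i ω) (hω i) j θ hθ hdθj
      have ht1' : AH ≤ |AH - IH| + δ := by
        have habs := le_abs_self (AH - IH)
        have := hHintlt j
        rw [← hIH] at this
        linarith
      have ht3 : |M j.1 - M θ| ≤ δ := by
        have hdiff : M j.1 - M θ = ∫ x, (φ j.1 x - φ θ x) ∂ρ :=
          (integral_sub (hφint j.1 j.2) (hφint θ hθ)).symm
        rw [hdiff]
        have h1 : |∫ x, (φ j.1 x - φ θ x) ∂ρ| ≤ ∫ x, |φ j.1 x - φ θ x| ∂ρ := by
          simpa [Real.norm_eq_abs] using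
            norm_integral_le_integral_norm (μ := ρ) (fun x => φ j.1 x - φ θ x)
        have h2 : ∫ x, |φ j.1 x - φ θ x| ∂ρ ≤ ∫ x, H j x ∂ρ := by
          refine integral_mono_ae ((hφint j.1 j.2).sub (hφint θ hθ)).abs (hHint j) ?_
          filter_upwards [hcont] with x hx
          rw [abs_sub_comm]
          exact hHkey x hx j θ hθ hdθj
        linarith [hHintlt j]
      have ht4 : |M θ - S| ≤ ∑ k, |((I k n ω).card : ℝ) / n - (ρ (Gk k)).toReal| * C k := by
        rw [hMsum θ hθ, hSdef, ← Finset.sum_sub_distrib]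
        refine (Finset.abs_sum_le_sum_abs _ _).trans ?_
        refine Finset.sum_le_sum fun k _ => ?_
        have he : (ρ (Gk k)).toReal * condE θ k - ((I k n ω).card : ℝ) / n * condE θ k
            = ((ρ (Gk k)).toReal - ((I k n ω).card : ℝ) / n) * condE θ k := by ring
        rw [he, abs_mul, abs_sub_comm]
        exact mul_le_mul_of_nonneg_left (hCb θ hθ k) (abs_nonneg _)
      have hterm_le : |Aj - M j.1| + |AH - IH| ≤ ∑ j' ∈ s,
          (|(∑ i ∈ range n, φ j'.1 (g i ω)) / n - M j'.1|
            + |(∑ i ∈ range n, H j' (g i ω)) / n - ∫ x, H j' x ∂ρ|) := by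
        have := Finset.single_le_sum
          (f := fun j' : ↥Θ => |(∑ i ∈ range n, φ j'.1 (g i ω)) / n - M j'.1|
            + |(∑ i ∈ range n, H j' (g i ω)) / n - ∫ x, H j' x ∂ρ|)
          (fun j' _ => add_nonneg (abs_nonneg _) (abs_nonneg _)) hjs
        simpa [hAj, hAH, hIH] using this
      have hZval : Z n ω = (∑ j' ∈ s,
          (|(∑ i ∈ range n, φ j'.1 (g i ω)) / n - M j'.1|
            + |(∑ i ∈ range n, H j' (g i ω)) / n - ∫ x, H j' x ∂ρ|))
          + ∑ k, |((I k n ω).card : ℝ) / n - (ρ (Gk k)).toReal| * C k := rfl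
      rw [hZval]
      linarith [tri, ht1, ht1', ht3, ht4, hterm_le]
  -- conclusion
  have hTIM : TendstoInMeasure P Z atTop (fun _ => (0 : ℝ)) :=
    tendstoInMeasure_of_tendsto_ae (fun n => (hZmeas n).aestronglyMeasurable) hZ0
  have hPN : P {ω | ¬ ∀ i : ℕ, ContinuousOn (fun θ => φ θ (g i ω)) Θ} = 0 :=
    ae_iff.1 hgood
  have hsub : ∀ n, {ω | ε ≤ ⨆ θ : Θ, |w θ n ω|}
      ⊆ {ω | ε / 2 ≤ dist (Z n ω) 0}
        ∪ {ω | ¬ ∀ i : ℕ, ContinuousOn (fun θ => φ θ (g i ω)) Θ} := by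
    intro n ω hωset
    by_cases hG : ∀ i : ℕ, ContinuousOn (fun θ => φ θ (g i ω)) Θ
    · left
      have hsup : (⨆ θ : Θ, |w θ n ω|) ≤ Z n ω + 2 * δ :=
        ciSup_le fun θ => hclaim ω hG n θ.1 θ.2
      rw [Set.mem_setOf_eq] at hωset
      have hle : ε ≤ Z n ω + 2 * δ := le_trans hωset hsup
      have hε2 : ε / 2 ≤ Z n ω := by
        rw [hδdef] at hle
        linarith
      rw [Set.mem_setOf_eq, Real.dist_0_eq_abs]
      exact le_trans hε2 (le_abs_self _)
    · right
      exact hG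
  have hb : ∀ n, P {ω | ε ≤ ⨆ θ : Θ, |w θ n ω|} ≤ P {ω | ε / 2 ≤ dist (Z n ω) 0} := by
    intro n
    calc P {ω | ε ≤ ⨆ θ : Θ, |w θ n ω|}
        ≤ P ({ω | ε / 2 ≤ dist (Z n ω) 0}
          ∪ {ω | ¬ ∀ i : ℕ, ContinuousOn (fun θ => φ θ (g i ω)) Θ}) :=
          measure_mono (hsub n)
      _ ≤ P {ω | ε / 2 ≤ dist (Z n ω) 0}
          + P {ω | ¬ ∀ i : ℕ, ContinuousOn (fun θ => φ θ (g i ω)) Θ} :=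
          measure_union_le _ _
      _ = P {ω | ε / 2 ≤ dist (Z n ω) 0} := by rw [hPN, add_zero]
  exact tendsto_of_tendsto_of_tendsto_of_le_of_le tendsto_const_nhds
    (tendstoInMeasure_iff_dist.1 hTIM (ε / 2) (by linarith)) (fun n => zero_le) hb
end
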